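/- arXiv:2110.04144 — 4 statements merged into one kernel-verified Lean document; each statement's English description precedes it below -/
import Mathlib

section
/- The complex function b(t) = (2-g²)/(2g²) + i√(1-g²) / (g² tan[√(1-g²) ωt - i·arctanh(2√(1-g²)/(2-g²))]) with 0 < g < 1 and ω > 0 satisfies the Riccati equation ḃ = -iω[-g²/4 + 2(1 - g²/2)b - g² b²] with initial condition b(0) = 0, and is periodic in t with period π/(ω√(1-g²)). -/
open Complex Real

/-- The inverse hyperbolic tangent, `artanh x = (1/2) log((1+x)/(1-x))`. -/
noncomputable def artanh (x : ℝ) : ℝ := (1/2) * Real.log ((1 + x) / (1 - x))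

lemma aux_cos_ne (z : ℂ) (hz : z.im ≠ 0) : Complex.cos z ≠ 0 := by
  intro h
  rw [Complex.cos_eq_zero_iff] at h
  obtain ⟨k, hk⟩ := h
  apply hz
  rw [hk, show ((2 * (k:ℂ) + 1) * (Real.pi:ℂ) / 2) = (((2*(k:ℝ)+1)*Real.pi/2 : ℝ) : ℂ) by push_cast; ring]
  exact Complex.ofReal_im _

lemma aux_sin_ne (z : ℂ) (hz : z.im ≠ 0) : Complex.sin z ≠ 0 := by
  intro h
  rw [Complex.sin_eq_zero_iff] at h
  obtain ⟨k, hk⟩ := h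
  apply hz
  rw [hk, show ((k:ℂ) * (Real.pi:ℂ)) = (((k:ℝ)*Real.pi : ℝ) : ℂ) by push_cast; ring]
  exact Complex.ofReal_im _

lemma aux_tan_ne (z : ℂ) (hz : z.im ≠ 0) : Complex.tan z ≠ 0 := by
  rw [Complex.tan_eq_sin_div_cos]
  exact div_ne_zero (aux_sin_ne z hz) (aux_cos_ne z hz)

lemma step1_alg (g s X : ℂ) (hg : g ≠ 0) (h2 : s^2 = 1 - g^2) :
    -(g^2)/4 + 2*(1-g^2/2)*((2-g^2)/(2*g^2) + X) - g^2*((2-g^2)/(2*g^2) + X)^2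
      = s^2/g^2 - g^2*X^2 := by
  have h6 : g^6 * g⁻¹^6 = 1 := by rw [← mul_pow, mul_inv_cancel₀ hg, one_pow]
  rw [h2]; field_simp
  ring

lemma step2_alg (g s S C : ℂ) (hg : g ≠ 0) (hS : S ≠ 0) (h1 : S^2 + C^2 = 1) :
    s^2/g^2 - g^2*(Complex.I*s*C/(g^2*S))^2 = s^2/(g^2*S^2) := by
  have hI : (Complex.I*s*C/(g^2*S))^2 = -(s^2*C^2/(g^4*S^2)) := by
    rw [div_pow, mul_pow, mul_pow, Complex.I_sq]; ring
  have hC2 : C^2 = 1 - S^2 := by linear_combination h1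
  rw [hI, hC2]; field_simp; ring

lemma key_alg (g s ω S C : ℂ) (hg : g ≠ 0) (hS : S ≠ 0) (hC : C ≠ 0)
    (h1 : S^2 + C^2 = 1) (h2 : s^2 = 1 - g^2) :
    (Complex.I * s / g^2) * (-((1/C^2) * (s*ω)) / (S/C)^2) =
      -(Complex.I*ω) * (-(g^2)/4 + 2*(1-g^2/2)*((2-g^2)/(2*g^2) + Complex.I*s/(g^2*(S/C)))
        - g^2*((2-g^2)/(2*g^2) + Complex.I*s/(g^2*(S/C)))^2) := by
  have hX : Complex.I*s/(g^2*(S/C)) = Complex.I*s*C/(g^2*S) := by field_simp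
  rw [hX, step1_alg g s _ hg h2, step2_alg g s S C hg hS h1]
  field_simp

/-- The explicit function `b(t)` solves the Riccati equation
`ḃ = -iω(-g²/4 + 2(1-g²/2)b - g²b²)` with `b(0) = 0`, and is periodic with period
`π/(ω√(1-g²))`. -/
theorem riccati_solution_quench (g ω : ℝ) (hg0 : 0 < g) (hg1 : g < 1) (hω : 0 < ω)
    (b : ℝ → ℂ)
    (hb : ∀ t : ℝ, b t = ((2 - g^2) / (2 * g^2) : ℝ) +
      Complex.I * (Real.sqrt (1 - g^2) : ℝ) /
        ((g^2 : ℝ) * Complex.tan ((Real.sqrt (1 - g^2) * ω * t : ℝ)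
          - Complex.I * (_root_.artanh (2 * Real.sqrt (1 - g^2) / (2 - g^2)) : ℝ)))) :
    (∀ t : ℝ, HasDerivAt b
      (-(Complex.I * (ω : ℝ)) *
        (-(g^2 : ℝ)/4 + 2 * (1 - (g^2 : ℝ)/2) * b t - (g^2 : ℝ) * (b t)^2)) t) ∧
    b 0 = 0 ∧
    Function.Periodic b (Real.pi / (ω * Real.sqrt (1 - g^2))) := by
  have hgne : (g:ℝ) ≠ 0 := ne_of_gt hg0
  have h1g : (0:ℝ) < 1 - g^2 := by nlinarith
  set s := Real.sqrt (1 - g^2) with hs_def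
  have hs0 : 0 < s := Real.sqrt_pos.mpr h1g
  have hs2 : s^2 = 1 - g^2 := Real.sq_sqrt h1g.le
  have h2g : (0:ℝ) < 2 - g^2 := by nlinarith
  set c := 2 * s / (2 - g^2) with hc_def
  have hc0 : 0 < c := by positivity
  have hc1 : c < 1 := by
    rw [hc_def, div_lt_one h2g]
    have key : (2 - g^2 - 2*s) * (2 - g^2 + 2*s) = g^4 := by linear_combination (-4 : ℝ)*hs2
    nlinarith [pow_pos hg0 4]
  set r := _root_.artanh c with hr_def
  have hq1 : (1:ℝ) < (1 + c) / (1 - c) := by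
    rw [lt_div_iff₀ (by linarith)]; linarith
  have hr0 : 0 < r := by
    have := Real.log_pos hq1
    rw [hr_def, _root_.artanh]; linarith
  have hexp : Real.exp (2 * r) = (1 + c) / (1 - c) := by
    rw [hr_def, _root_.artanh, show (2:ℝ) * ((1/2) * Real.log ((1+c)/(1-c))) = Real.log ((1+c)/(1-c)) by ring]
    exact Real.exp_log (by positivity)
  have htanh : Real.tanh r = c := by
    have hE : Real.exp r ^ 2 = (1 + c) / (1 - c) := by
      rw [← hexp, two_mul, Real.exp_add, sq]
    have hE' : (1 - c) * Real.exp r ^ 2 = 1 + c := by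
      rw [hE, mul_comm, div_mul_cancel₀ _ (by linarith : (1:ℝ) - c ≠ 0)]
    have hEpos := Real.exp_pos r
    have hden : Real.exp r + (Real.exp r)⁻¹ ≠ 0 := by positivity
    rw [Real.tanh_eq_sinh_div_cosh, Real.sinh_eq, Real.cosh_eq, Real.exp_neg]
    field_simp
    linear_combination hE'
  -- complex setup
  have hrne : r ≠ 0 := ne_of_gt hr0
  have harg : ∀ t : ℝ, (((s * ω * t : ℝ):ℂ) - Complex.I * (r:ℂ)).im ≠ 0 := by
    intro t
    have : (((s * ω * t : ℝ):ℂ) - Complex.I * (r:ℂ)).im = -r := by simp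
    rw [this]; simpa using hrne
  have hcos : ∀ t : ℝ, Complex.cos (((s * ω * t : ℝ):ℂ) - Complex.I * (r:ℂ)) ≠ 0 :=
    fun t => aux_cos_ne _ (harg t)
  have hsin : ∀ t : ℝ, Complex.sin (((s * ω * t : ℝ):ℂ) - Complex.I * (r:ℂ)) ≠ 0 :=
    fun t => aux_sin_ne _ (harg t)
  have htan : ∀ t : ℝ, Complex.tan (((s * ω * t : ℝ):ℂ) - Complex.I * (r:ℂ)) ≠ 0 :=
    fun t => aux_tan_ne _ (harg t)
  have hgC : (g:ℂ) ≠ 0 := by exact_mod_cast hgne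
  have hs2C : (s:ℂ)^2 = 1 - (g:ℂ)^2 := by
    have := congrArg (Complex.ofReal) hs2
    push_cast at this; exact this
  refine ⟨?_, ?_, ?_⟩
  · intro t
    have h1d : HasDerivAt (fun x : ℝ => ((x:ℝ):ℂ)) 1 t := by
      simpa using (hasDerivAt_id t).ofReal_comp
    have hu : HasDerivAt (fun x : ℝ => ((s * ω * x : ℝ):ℂ) - Complex.I * (r:ℂ))
        (((s * ω : ℝ) : ℂ)) t := by
      have : (fun x : ℝ => ((s * ω * x : ℝ):ℂ) - Complex.I * (r:ℂ))
          = fun x : ℝ => ((s * ω : ℝ) : ℂ) * ((x:ℝ):ℂ) - Complex.I * (r:ℂ) := by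
        funext x; push_cast; ring
      rw [this]
      simpa using (h1d.const_mul (((s * ω : ℝ)):ℂ)).sub_const (Complex.I * (r:ℂ))
    set z := ((s * ω * t : ℝ):ℂ) - Complex.I * (r:ℂ) with hz_def
    have htand : HasDerivAt (fun x : ℝ => Complex.tan (((s * ω * x : ℝ):ℂ) - Complex.I * (r:ℂ)))
        ((1 / Complex.cos z ^ 2) * ((s * ω : ℝ) : ℂ)) t :=
      HasDerivAt.comp (𝕜 := ℝ) (𝕜' := ℂ) t (Complex.hasDerivAt_tan (hcos t)) hu
    have hinv := (hasDerivAt_inv (htan t)).comp t htand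
    have hbF : b = fun x : ℝ => (((2 - g^2) / (2 * g^2) : ℝ) : ℂ) +
        (Complex.I * (s:ℝ) / ((g^2:ℝ):ℂ)) *
          (Complex.tan (((s * ω * x : ℝ):ℂ) - Complex.I * (r:ℂ)))⁻¹ := by
      funext x; rw [hb x]; ring
    rw [hbF]
    have hD : HasDerivAt (fun x : ℝ => (((2 - g^2) / (2 * g^2) : ℝ) : ℂ) +
        (Complex.I * (s:ℝ) / ((g^2:ℝ):ℂ)) *
          (Complex.tan (((s * ω * x : ℝ):ℂ) - Complex.I * (r:ℂ)))⁻¹)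
        ((Complex.I * (s:ℝ) / ((g^2:ℝ):ℂ)) *
          (-(Complex.tan z ^ 2)⁻¹ * ((1 / Complex.cos z ^ 2) * ((s * ω : ℝ) : ℂ)))) t := by
      exact (hinv.const_mul _).const_add _
    refine hD.congr_deriv ?_
    beta_reduce
    rw [← hz_def]
    simp only [Complex.ofReal_pow, Complex.ofReal_mul, Complex.ofReal_div,
      Complex.ofReal_sub, Complex.ofReal_ofNat]
    rw [Complex.tan_eq_sin_div_cos]
    linear_combination key_alg (g:ℂ) (s:ℂ) (ω:ℂ) (Complex.sin z) (Complex.cos z)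
      hgC (hsin t) (hcos t) (Complex.sin_sq_add_cos_sq z) hs2C
  · rw [hb 0]
    have htan0 : Complex.tan (((s * ω * 0 : ℝ):ℂ) - Complex.I * (r:ℂ)) = -((c:ℝ) * Complex.I) := by
      rw [show ((s * ω * 0 : ℝ):ℂ) - Complex.I * (r:ℂ) = -(((r:ℝ):ℂ) * Complex.I) by push_cast; ring,
        Complex.tan_neg, Complex.tan_mul_I, ← Complex.ofReal_tanh, htanh]
    rw [htan0]
    have hcC : (c:ℂ) * (2 - (g:ℂ)^2) = 2 * (s:ℂ) := by
      have : c * (2 - g^2) = 2 * s := by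
        rw [hc_def, div_mul_eq_mul_div, mul_div_assoc, div_self (ne_of_gt h2g), mul_one]
      exact_mod_cast this
    have hcne : (c:ℂ) ≠ 0 := by exact_mod_cast ne_of_gt hc0
    push_cast
    field_simp
    linear_combination hcC
  · intro t
    rw [hb (t + Real.pi / (ω * s)), hb t]
    have hreal : s * ω * (t + Real.pi / (ω * s)) = s * ω * t + Real.pi := by
      field_simp
    have harg' : ((s * ω * (t + Real.pi / (ω * s)) : ℝ):ℂ) - Complex.I * (r:ℂ)
        = (((s * ω * t : ℝ):ℂ) - Complex.I * (r:ℂ)) + (Real.pi : ℂ) := by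
      rw [hreal]; push_cast; ring
    rw [harg', Complex.tan_periodic _]
end

section
/- For 0 < g < 1, the solution b(t) of the Riccati equation ḃ = -iω[-g²/4 + 2(1-g²/2)b - g²b²], b(0) = 0, satisfies b(nτ) = 0 for every integer n ≥ 0 and b((n+1/2)τ) = g²/(2(2-g²)), where τ = π/(ω√(1-g²)); moreover the photon number N(t) = 4|b|²/(1-4|b|²) attains minimum 0 and maximum g⁴/(4(1-g²)) over each period. -/
open Complex Real

lemma exp_artanh (g : ℝ) (hg0 : 0 < g) (hg1 : g < 1) :
    Real.exp (_root_.artanh (2 * Real.sqrt (1 - g^2) / (2 - g^2))) =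
      (2 - g^2 + 2 * Real.sqrt (1 - g^2)) / g^2 := by
  set s := Real.sqrt (1 - g^2) with hs
  have hs2 : s^2 = 1 - g^2 := Real.sq_sqrt (by nlinarith)
  have hspos : 0 < s := Real.sqrt_pos.mpr (by nlinarith)
  have hp : 0 < 2 - g^2 := by nlinarith
  have hg2 : (0:ℝ) < g^2 := by positivity
  have h2s : 2*s < 2 - g^2 := by nlinarith
  have hK : 0 < (2 - g^2 + 2*s) / g^2 := by positivity
  have hR : (1 + 2*s/(2-g^2)) / (1 - 2*s/(2-g^2)) = ((2 - g^2 + 2*s)/g^2)^2 := by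
    have h1 : (0:ℝ) < 1 - 2*s/(2-g^2) := by
      rw [sub_pos, div_lt_one hp]; linarith
    rw [div_eq_iff (ne_of_gt h1), div_pow, div_mul_eq_mul_div, eq_div_iff (by positivity)]
    have : (2 - g^2 + 2*s)^2 * (1 - 2*s/(2-g^2)) = (2-g^2+2*s)^2 * (2 - g^2 - 2*s)/(2-g^2) := by
      field_simp
    rw [this, eq_div_iff (ne_of_gt hp)]
    field_simp
    nlinarith [hs2]
  rw [_root_.artanh, hR, Real.log_pow]
  push_cast
  rw [show (1/2 : ℝ) * (2 * Real.log ((2 - g^2 + 2*s)/g^2)) = Real.log ((2-g^2+2*s)/g^2) by ring,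
    Real.exp_log hK]

lemma cosh_artanh (g : ℝ) (hg0 : 0 < g) (hg1 : g < 1) :
    Real.cosh (_root_.artanh (2 * Real.sqrt (1 - g^2) / (2 - g^2))) = (2 - g^2) / g^2 ∧
    Real.sinh (_root_.artanh (2 * Real.sqrt (1 - g^2) / (2 - g^2))) = 2 * Real.sqrt (1 - g^2) / g^2 := by
  set s := Real.sqrt (1 - g^2) with hs
  have hs2 : s^2 = 1 - g^2 := Real.sq_sqrt (by nlinarith)
  have hspos : 0 < s := Real.sqrt_pos.mpr (by nlinarith)
  have hp : 0 < 2 - g^2 := by nlinarith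
  have hg2 : (0:ℝ) < g^2 := by positivity
  have hE := exp_artanh g hg0 hg1
  rw [← hs] at hE
  have hEn : Real.exp (-(_root_.artanh (2 * s / (2 - g^2)))) = g^2 / (2 - g^2 + 2*s) := by
    rw [Real.exp_neg, hE, inv_div]
  constructor
  · rw [Real.cosh_eq, hE, hEn]
    rw [div_add_div _ _ (ne_of_gt hg2) (by positivity), div_div, div_eq_div_iff (by positivity) (ne_of_gt hg2)]
    nlinarith [hs2]
  · rw [Real.sinh_eq, hE, hEn]
    rw [div_sub_div _ _ (ne_of_gt hg2) (by positivity), div_div, div_eq_div_iff (by positivity) (ne_of_gt hg2)]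
    nlinarith [hs2]

lemma key (g : ℝ) (hg0 : 0 < g) (hg1 : g < 1) (x : ℝ) :
    (((2 - g^2) / (2 * g^2) : ℝ) : ℂ) +
      Complex.I * ((Real.sqrt (1 - g^2) : ℝ) : ℂ) /
        (((g^2 : ℝ) : ℂ) * Complex.tan ((x : ℝ) - Complex.I * (_root_.artanh (2 * Real.sqrt (1 - g^2) / (2 - g^2)) : ℝ))) =
    (((2-g^2)*g^2*(Real.sin x)^2/(2*(4*(1-g^2)+g^4*(Real.sin x)^2)) : ℝ) : ℂ) +
    ((Real.sqrt (1-g^2)*g^2*Real.sin x*Real.cos x/(4*(1-g^2)+g^4*(Real.sin x)^2) : ℝ) : ℂ) * Complex.I := by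
  set s := Real.sqrt (1 - g^2) with hs
  set a := _root_.artanh (2 * s / (2 - g^2)) with ha
  have hs2 : s^2 = 1 - g^2 := Real.sq_sqrt (by nlinarith)
  have hspos : 0 < s := Real.sqrt_pos.mpr (by nlinarith)
  have hp : 0 < 2 - g^2 := by nlinarith
  have hg2 : (0:ℝ) < g^2 := by positivity
  have h1g : (0:ℝ) < 1 - g^2 := by nlinarith
  obtain ⟨hcosh, hsinh⟩ := cosh_artanh g hg0 hg1
  rw [← hs, ← ha] at hcosh hsinh
  have hsin : Complex.sin ((x:ℂ) - Complex.I * (a:ℂ)) =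
      (Real.sin x : ℂ) * ((2-(g:ℂ)^2)/(g:ℂ)^2) - (Real.cos x : ℂ) * (2*(s:ℂ)/(g:ℂ)^2) * Complex.I := by
    rw [mul_comm Complex.I (a:ℂ), Complex.sin_sub, Complex.cos_mul_I, Complex.sin_mul_I,
      ← Complex.ofReal_sin, ← Complex.ofReal_cos, ← Complex.ofReal_cosh, ← Complex.ofReal_sinh,
      hcosh, hsinh]
    push_cast
    ring
  have hcos : Complex.cos ((x:ℂ) - Complex.I * (a:ℂ)) =
      (Real.cos x : ℂ) * ((2-(g:ℂ)^2)/(g:ℂ)^2) + (Real.sin x : ℂ) * (2*(s:ℂ)/(g:ℂ)^2) * Complex.I := by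
    rw [mul_comm Complex.I (a:ℂ), Complex.cos_sub, Complex.cos_mul_I, Complex.sin_mul_I,
      ← Complex.ofReal_sin, ← Complex.ofReal_cos, ← Complex.ofReal_cosh, ← Complex.ofReal_sinh,
      hcosh, hsinh]
    push_cast
    ring
  have hgc : (g:ℂ) ≠ 0 := by exact_mod_cast hg0.ne'
  have hapos : 0 < a := by
    have h1 : 0 < Real.sinh a := by rw [hsinh]; positivity
    exact Real.sinh_pos_iff.mp h1
  have hsinne : Complex.sin ((x:ℂ) - Complex.I * (a:ℂ)) ≠ 0 := by
    intro h
    rw [Complex.sin_eq_zero_iff] at h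
    obtain ⟨k, hk⟩ := h
    have := congrArg Complex.im hk
    simp at this
    linarith
  have hcosne : Complex.cos ((x:ℂ) - Complex.I * (a:ℂ)) ≠ 0 := by
    intro h
    rw [Complex.cos_eq_zero_iff] at h
    obtain ⟨k, hk⟩ := h
    have := congrArg Complex.im hk
    simp at this
    linarith
  rw [hsin] at hsinne
  rw [hcos] at hcosne
  have hDpos : (0:ℝ) < 4*(1-g^2)+g^4*(Real.sin x)^2 := by positivity
  have hDC : ((4*(1-g^2)+g^4*(Real.sin x)^2 : ℝ) : ℂ) ≠ 0 := by exact_mod_cast hDpos.ne'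
  have hpyr : (Real.sin x)^2 + (Real.cos x)^2 = 1 := Real.sin_sq_add_cos_sq x
  rw [Complex.tan_eq_sin_div_cos, hsin, hcos]
  generalize hq1 : Real.sin x = sn at hsinne hcosne hDC hpyr ⊢
  generalize hq2 : Real.cos x = cs at hsinne hcosne hpyr ⊢
  have hsC : (s:ℂ)^2 = 1 - (g:ℂ)^2 := by
    have h := congrArg (fun r : ℝ => (r : ℂ)) hs2
    push_cast at h; exact h
  have hpy : (sn:ℂ)^2 + (cs:ℂ)^2 = 1 := by exact_mod_cast hpyr
  push_cast at hDC ⊢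
  have hne2 : ((sn:ℂ)*(2-(g:ℂ)^2) - (cs:ℂ)*(2*(s:ℂ))*Complex.I) ≠ 0 := by
    have he : ((sn:ℂ)*(2-(g:ℂ)^2) - (cs:ℂ)*(2*(s:ℂ))*Complex.I)
        = Complex.ofReal (sn*(2-g^2)) + Complex.ofReal (-(cs*(2*s))) * Complex.I := by
      push_cast; ring
    rw [he]
    set A := sn*(2-g^2) with hA
    set B := -(cs*(2*s)) with hB
    intro h
    rw [Complex.ext_iff] at h
    simp only [Complex.add_re, Complex.add_im, Complex.ofReal_re, Complex.ofReal_im,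
      Complex.mul_re, Complex.mul_im, Complex.I_re, Complex.I_im, Complex.zero_re,
      Complex.zero_im] at h
    obtain ⟨h1, h2⟩ := h
    rw [hA] at h1
    rw [hB] at h2
    simp only [mul_zero, mul_one, zero_mul, sub_zero, zero_add, zero_sub, add_zero] at h1 h2
    have hsn0 : sn = 0 := by
      rcases mul_eq_zero.mp h1 with h|h
      · exact h
      · linarith
    have hcs0 : cs = 0 := by
      rcases mul_eq_zero.mp (by linarith : cs*(2*s) = 0) with h|h
      · exact h
      · linarith
    rw [hsn0, hcs0] at hpyr; norm_num at hpyr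
  have hne3 : ((cs:ℂ)*(2-(g:ℂ)^2) + (sn:ℂ)*(2*(s:ℂ))*Complex.I) ≠ 0 := by
    have he : ((cs:ℂ)*(2-(g:ℂ)^2) + (sn:ℂ)*(2*(s:ℂ))*Complex.I)
        = Complex.ofReal (cs*(2-g^2)) + Complex.ofReal (sn*(2*s)) * Complex.I := by
      push_cast; ring
    rw [he]
    set A := cs*(2-g^2) with hA
    set B := sn*(2*s) with hB
    intro h
    rw [Complex.ext_iff] at h
    simp only [Complex.add_re, Complex.add_im, Complex.ofReal_re, Complex.ofReal_im,
      Complex.mul_re, Complex.mul_im, Complex.I_re, Complex.I_im, Complex.zero_re,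
      Complex.zero_im] at h
    obtain ⟨h1, h2⟩ := h
    rw [hA] at h1
    rw [hB] at h2
    simp only [mul_zero, mul_one, zero_mul, sub_zero, zero_add, zero_sub, add_zero] at h1 h2
    have hcs0 : cs = 0 := by
      rcases mul_eq_zero.mp h1 with h|h
      · exact h
      · linarith
    have hsn0 : sn = 0 := by
      rcases mul_eq_zero.mp h2 with h|h
      · exact h
      · linarith
    rw [hsn0, hcs0] at hpyr; norm_num at hpyr
  have hT : ((sn:ℂ) * ((2 - (g:ℂ) ^ 2) / (g:ℂ) ^ 2) - (cs:ℂ) * (2 * (s:ℂ) / (g:ℂ) ^ 2) * I) / ((cs:ℂ) * ((2 - (g:ℂ) ^ 2) / (g:ℂ) ^ 2) + (sn:ℂ) * (2 * (s:ℂ) / (g:ℂ) ^ 2) * I) = ((sn:ℂ)*(2-(g:ℂ)^2) - (cs:ℂ)*(2*(s:ℂ))*Complex.I) / ((cs:ℂ)*(2-(g:ℂ)^2) + (sn:ℂ)*(2*(s:ℂ))*Complex.I) := by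
    have e1 : (sn:ℂ) * ((2 - (g:ℂ) ^ 2) / (g:ℂ) ^ 2) - (cs:ℂ) * (2 * (s:ℂ) / (g:ℂ) ^ 2) * I = ((sn:ℂ)*(2-(g:ℂ)^2) - (cs:ℂ)*(2*(s:ℂ))*Complex.I) / (g:ℂ)^2 := by ring
    have e2 : (cs:ℂ) * ((2 - (g:ℂ) ^ 2) / (g:ℂ) ^ 2) + (sn:ℂ) * (2 * (s:ℂ) / (g:ℂ) ^ 2) * I = ((cs:ℂ)*(2-(g:ℂ)^2) + (sn:ℂ)*(2*(s:ℂ))*Complex.I) / (g:ℂ)^2 := by ring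
    rw [e1, e2, div_div_div_cancel_right₀ (pow_ne_zero 2 hgc)]
  rw [hT, mul_div_assoc', div_div_eq_mul_div]
  have hne2'' : (2 - (g:ℂ) ^ 2) * (sn:ℂ) - 2 * I * (s:ℂ) * (cs:ℂ) ≠ 0 := by
    convert hne2 using 1; ring
  field_simp [hne2, hne3, hne2'']
  linear_combination (4*(s:ℂ)^2*(sn:ℂ)*(4*(1-(g:ℂ)^2)+(g:ℂ)^4*(sn:ℂ)^2) + 4*(s:ℂ)^2*(cs:ℂ)^2*(g:ℂ)^4*(sn:ℂ))*Complex.I_sq + (-4*(sn:ℂ)*(4*(1-(g:ℂ)^2)+(g:ℂ)^4*(sn:ℂ)^2) - 4*(g:ℂ)^4*(sn:ℂ)*(cs:ℂ)^2)*hsC + (-4*(g:ℂ)^4*(sn:ℂ)*(1-(g:ℂ)^2))*hpy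

/-- For the post-quench squeezing `b(t)` with period `τ = π/(ω√(1-g²))`:
`b(nτ) = 0`, `b((n+1/2)τ) = g²/(2(2-g²))`, and the photon number
`N = 4|b|²/(1-4|b|²)` stays in `[0, g⁴/(4(1-g²))]`, attaining both extremes. -/
theorem quench_periodic_extrema (g ω : ℝ) (hg0 : 0 < g) (hg1 : g < 1) (hω : 0 < ω)
    (b : ℝ → ℂ) (N : ℝ → ℝ) (τ : ℝ)
    (hτ : τ = Real.pi / (ω * Real.sqrt (1 - g^2)))
    (hb : ∀ t : ℝ, b t = ((2 - g^2) / (2 * g^2) : ℝ) +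
      Complex.I * (Real.sqrt (1 - g^2) : ℝ) /
        ((g^2 : ℝ) * Complex.tan ((Real.sqrt (1 - g^2) * ω * t : ℝ)
          - Complex.I * (_root_.artanh (2 * Real.sqrt (1 - g^2) / (2 - g^2)) : ℝ))))
    (hN : ∀ t : ℝ, N t = 4 * ‖b t‖ ^ 2 / (1 - 4 * ‖b t‖ ^ 2)) :
    (∀ n : ℕ, b (n * τ) = 0) ∧
    (∀ n : ℕ, b ((n + 1/2) * τ) = (g^2 / (2 * (2 - g^2)) : ℝ)) ∧
    (∀ t : ℝ, 0 ≤ N t ∧ N t ≤ g^4 / (4 * (1 - g^2))) ∧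
    (∀ n : ℕ, N (n * τ) = 0 ∧ N ((n + 1/2) * τ) = g^4 / (4 * (1 - g^2))) := by
  have h1g : (0:ℝ) < 1 - g^2 := by nlinarith
  set s := Real.sqrt (1 - g^2) with hs
  have hs2 : s^2 = 1 - g^2 := Real.sq_sqrt (by nlinarith)
  have hspos : 0 < s := Real.sqrt_pos.mpr h1g
  have hp : (0:ℝ) < 2 - g^2 := by nlinarith
  have hkey : ∀ t : ℝ, b t =
      (((2-g^2)*g^2*(Real.sin (s*ω*t))^2/(2*(4*(1-g^2)+g^4*(Real.sin (s*ω*t))^2)) : ℝ) : ℂ) +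
      (((s*g^2*Real.sin (s*ω*t)*Real.cos (s*ω*t)/(4*(1-g^2)+g^4*(Real.sin (s*ω*t))^2)) : ℝ) : ℂ) * Complex.I := by
    intro t
    rw [hb t]
    exact key g hg0 hg1 (s*ω*t)
  have hNt : ∀ t : ℝ, N t = g^4 * (Real.sin (s*ω*t))^2 / (4*(1-g^2)) := by
    intro t
    have hpy := Real.sin_sq_add_cos_sq (s*ω*t)
    set sn := Real.sin (s*ω*t) with hsn
    set cs := Real.cos (s*ω*t) with hcs
    have hD : (0:ℝ) < 4*(1-g^2)+g^4*sn^2 := by positivity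
    have habs : (‖b t‖)^2 =
        ((2-g^2)*g^2*sn^2/(2*(4*(1-g^2)+g^4*sn^2)))^2 + (s*g^2*sn*cs/(4*(1-g^2)+g^4*sn^2))^2 := by
      rw [hkey t, Complex.sq_norm, Complex.normSq_add_mul_I]
    have hsum : 4*(‖b t‖)^2 = g^4*sn^2/(4*(1-g^2)+g^4*sn^2) := by
      rw [habs]
      rw [div_pow, div_pow, div_add_div _ _ (by positivity) (by positivity),
        ← mul_div_assoc, div_eq_div_iff (by positivity) (ne_of_gt hD)]
      linear_combination ((1024)*g^4*sn^2*cs^2 + (-3072)*g^6*sn^2*cs^2 + (3072)*g^8*sn^2*cs^2 + (768)*g^8*sn^4*cs^2 + (-1024)*g^10*sn^2*cs^2 + (-1536)*g^10*sn^4*cs^2 + (768)*g^12*sn^4*cs^2 + (192)*g^12*sn^6*cs^2 + (-192)*g^14*sn^6*cs^2 + (16)*g^16*sn^8*cs^2)*hs2 + ((1024)*g^4*sn^2 + (-4096)*g^6*sn^2 + (6144)*g^8*sn^2 + (768)*g^8*sn^4 + (-4096)*g^10*sn^2 + (-2304)*g^10*sn^4 + (1024)*g^12*sn^2 + (2304)*g^12*sn^4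 + (192)*g^12*sn^6 + (-768)*g^14*sn^4 + (-384)*g^14*sn^6 + (192)*g^16*sn^6 + (16)*g^16*sn^8 + (-16)*g^18*sn^8)*hpy
    rw [hN t, hsum]
    have h1m : 1 - g^4*sn^2/(4*(1-g^2)+g^4*sn^2) = 4*(1-g^2)/(4*(1-g^2)+g^4*sn^2) := by
      field_simp
      ring
    rw [h1m]
    rw [div_div_div_eq]
    field_simp
  refine ⟨?_, ?_, ?_, ?_⟩
  · intro n
    have hx : s * ω * ((n:ℝ) * τ) = (n:ℝ) * Real.pi := by
      rw [hτ]; field_simp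
    rw [hkey ((n:ℝ) * τ), hx]
    simp [Real.sin_nat_mul_pi]
  · intro n
    have hx : s * ω * (((n:ℝ) + 1/2) * τ) = ((n:ℝ) + 1/2) * Real.pi := by
      rw [hτ]; field_simp
    have hcos0 : Real.cos (((n:ℝ) + 1/2) * Real.pi) = 0 := by
      rw [show ((n:ℝ) + 1/2) * Real.pi = (n:ℝ) * Real.pi + Real.pi/2 by ring,
        Real.cos_add_pi_div_two, Real.sin_nat_mul_pi, neg_zero]
    have hsn1 : (Real.sin (((n:ℝ) + 1/2) * Real.pi))^2 = 1 := by
      have := Real.sin_sq_add_cos_sq (((n:ℝ) + 1/2) * Real.pi)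
      rw [hcos0] at this
      nlinarith [this]
    rw [hkey (((n:ℝ) + 1/2) * τ), hx, hcos0, hsn1]
    have hA : (2-g^2)*g^2*1/(2*(4*(1-g^2)+g^4*1)) = g^2/(2*(2-g^2)) := by
      rw [div_eq_div_iff (by nlinarith) (by nlinarith)]
      ring
    rw [hA]
    simp
  · intro t
    rw [hNt t]
    constructor
    · positivity
    · rw [div_le_div_iff₀ (by positivity) (by positivity)]
      have hle := mul_le_mul_of_nonneg_left (Real.sin_sq_le_one (s*ω*t)) (pow_nonneg hg0.le 4)
      nlinarith [hle, h1g]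
  · intro n
    constructor
    · have hx : s * ω * ((n:ℝ) * τ) = (n:ℝ) * Real.pi := by
        rw [hτ]; field_simp
      rw [hNt ((n:ℝ) * τ), hx, Real.sin_nat_mul_pi]
      norm_num
    · have hx : s * ω * (((n:ℝ) + 1/2) * τ) = ((n:ℝ) + 1/2) * Real.pi := by
        rw [hτ]; field_simp
      have hcos0 : Real.cos (((n:ℝ) + 1/2) * Real.pi) = 0 := by
        rw [show ((n:ℝ) + 1/2) * Real.pi = (n:ℝ) * Real.pi + Real.pi/2 by ring,
          Real.cos_add_pi_div_two, Real.sin_nat_mul_pi, neg_zero]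
      have hsn1 : (Real.sin (((n:ℝ) + 1/2) * Real.pi))^2 = 1 := by
        have := Real.sin_sq_add_cos_sq (((n:ℝ) + 1/2) * Real.pi)
        rw [hcos0] at this
        nlinarith [this]
      rw [hNt (((n:ℝ) + 1/2) * τ), hx, hsn1, mul_one]
end

section
/- Let X, Y, s, A₁, A₂, b, c, χ, φ be reals with X, Y ≥ 0, XY ≥ 1/4, s := b² + c² and the eigenvalue relations χ+φ = A₁+A₂, χφ = A₁A₂ - s. Then the quantity V = 2(A₁²X² + A₂²Y²) + 4XYb² - A₁A₂ + b² satisfies V ≤ 2(φ²+χ²)[(X+Y)² - 1/2]. -/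
/-- Central inequality of the Gaussian QFI bound: with quadrature variances
`X, Y ≥ 0`, `XY ≥ 1/4` (Heisenberg), `s = b²+c²`, and eigenvalue relations
`χ+φ = A₁+A₂`, `χφ = A₁A₂-s`, the variance expression
`V = 2(A₁²X² + A₂²Y²) + 4XYb² - A₁A₂ + b²` obeys `V ≤ 2(φ²+χ²)[(X+Y)² - 1/2]`. -/
theorem gaussian_qfi_variance_bound (X Y s A₁ A₂ b c χ φ : ℝ)
    (hX : 0 ≤ X) (hY : 0 ≤ Y) (hXY : 1/4 ≤ X * Y)
    (hs : s = b^2 + c^2)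
    (hsum : χ + φ = A₁ + A₂)
    (hprod : χ * φ = A₁ * A₂ - s) :
    2 * (A₁^2 * X^2 + A₂^2 * Y^2) + 4 * X * Y * b^2 - A₁ * A₂ + b^2
      ≤ 2 * (φ^2 + χ^2) * ((X + Y)^2 - 1/2) := by
  have hS : φ^2 + χ^2 = A₁^2 + A₂^2 + 2*(b^2+c^2) := by
    have h : φ^2 + χ^2 = (χ + φ)^2 - 2*(χ*φ) := by ring
    rw [h, hsum, hprod, hs]; ring
  rw [hS]
  have h1 : Y^2 ≤ (X+Y)^2 - 1/2 - X^2 := by nlinarith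
  have h2 : X^2 ≤ (X+Y)^2 - 1/2 - Y^2 := by nlinarith
  have hb : 3*b^2 ≤ 4*b^2*((X+Y)^2 - X*Y) := by
    nlinarith [mul_nonneg (sq_nonneg b) (sq_nonneg (X-Y)),
      mul_le_mul_of_nonneg_left hXY (sq_nonneg b)]
  have hc : 2*c^2 ≤ 4*c^2*((X+Y)^2 - 1/2) := by
    nlinarith [mul_nonneg (sq_nonneg c) (sq_nonneg (X-Y)),
      mul_le_mul_of_nonneg_left hXY (sq_nonneg c)]
  have hA : 0 ≤ 2*A₁^2*Y^2 + 2*A₂^2*X^2 + A₁*A₂ := by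
    rcases le_or_gt 0 (A₁*A₂) with h | h
    · nlinarith [sq_nonneg (A₁*Y), sq_nonneg (A₂*X)]
    · nlinarith [sq_nonneg (A₁*Y + A₂*X),
        mul_le_mul_of_nonneg_left hXY (le_of_lt (neg_pos.mpr h))]
  have H1 := mul_le_mul_of_nonneg_left h1 (show (0:ℝ) ≤ 2*A₁^2 by positivity)
  have H2 := mul_le_mul_of_nonneg_left h2 (show (0:ℝ) ≤ 2*A₂^2 by positivity)
  linarith [H1, H2, hb, hc, hA, sq_nonneg c]
end

section
/- Let b(t) = (ωt)/(2(ωt-2i)) and set g = 2λ/√(ωΩ) = 1. Then the partial derivatives of b with respect to the effective parameters satisfy, in the limit ωT → ∞: g·∂b/∂g ~ iωT, ω·∂b/∂ω ~ -i/(ωT), and 1-4|b|² ~ 4/(ωT)². Consequently Q_g⁰ := 8|g ∂_g b|²/(1-4|b|²)² ~ (ωT)⁶/2 and Q_ω⁰ := 8|ω ∂_ω b|²/(1-4|b|²)² ~ (ωT)²/2. -/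
open Filter Complex

lemma qfi_hden (s : ℝ) : ((s:ℂ) - 2*Complex.I) ≠ 0 := by
  intro h
  have := congrArg Complex.im h
  simp at this

noncomputable def qF1 (u : ℝ) : ℂ :=
  1 + (8*Complex.I*(u:ℂ)^3 - 2*(u:ℂ)^2)/((1 - 2*Complex.I*(u:ℂ))^2)

noncomputable def qF2 (u : ℝ) : ℂ := -Complex.I/((1 - 2*Complex.I*(u:ℂ))^2)

noncomputable def qF3 (u : ℝ) : ℝ := (1 + 4*u^2)^2/2

noncomputable def qF4 (u : ℝ) : ℝ := 4/(1 + 4*u^2)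

lemma qF1_tendsto : Tendsto (fun s : ℝ => qF1 s⁻¹) atTop (nhds 1) := by
  have hc : ContinuousAt qF1 0 := by
    apply ContinuousAt.add continuousAt_const
    apply ContinuousAt.div
    · fun_prop
    · fun_prop
    · norm_num
  have h0 : qF1 0 = 1 := by norm_num [qF1]
  exact h0 ▸ hc.tendsto.comp tendsto_inv_atTop_zero

lemma qF2_tendsto : Tendsto (fun s : ℝ => qF2 s⁻¹) atTop (nhds (-Complex.I)) := by
  have hc : ContinuousAt qF2 0 := by
    apply ContinuousAt.div continuousAt_const
    · fun_prop
    · norm_num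
  have h0 : qF2 0 = -Complex.I := by norm_num [qF2]
  exact h0 ▸ hc.tendsto.comp tendsto_inv_atTop_zero

lemma qF3_tendsto : Tendsto (fun s : ℝ => qF3 s⁻¹) atTop (nhds (1/2)) := by
  have hc : ContinuousAt qF3 0 := by unfold qF3; fun_prop
  have h0 : qF3 0 = 1/2 := by norm_num [qF3]
  exact h0 ▸ hc.tendsto.comp tendsto_inv_atTop_zero

lemma qF4_tendsto : Tendsto (fun s : ℝ => qF4 s⁻¹) atTop (nhds 4) := by
  have hc : ContinuousAt qF4 0 := by
    apply ContinuousAt.div continuousAt_const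
    · fun_prop
    · norm_num
  have h0 : qF4 0 = 4 := by norm_num [qF4]
  exact h0 ▸ hc.tendsto.comp tendsto_inv_atTop_zero

/-- Asymptotics of the post-quench sensitivities at the critical point `g = 1`, with
`s = ωT`: for the exact expressions
`g∂_g b = -2 + i(s-2i) + 2i(4i-s)/(s-2i)²`, `ω∂_ω b = -is/(s-2i)²`,
`1-4|b|² = 4/(s²+4)` (with `b = s/(2(s-2i))`), one has as `s → ∞`:
`g∂_g b ~ is`, `ω∂_ω b ~ -i/s`, `1-4|b|² ~ 4/s²`, and consequently
`Q_g⁰ = 8|g∂_g b|²/(1-4|b|²)² ~ s⁶/2` and `Q_ω⁰ = 8|ω∂_ω b|²/(1-4|b|²)² ~ s²/2`. -/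
theorem quench_qfi_asymptotics
    (b Dg Dw : ℝ → ℂ) (Qg Qw : ℝ → ℝ)
    (hb : ∀ s : ℝ, b s = (s : ℂ) / (2 * ((s : ℂ) - 2 * Complex.I)))
    (hDg : ∀ s : ℝ, Dg s = -2 + Complex.I * ((s : ℂ) - 2 * Complex.I)
      + 2 * Complex.I * (4 * Complex.I - (s : ℂ)) / ((s : ℂ) - 2 * Complex.I)^2)
    (hDw : ∀ s : ℝ, Dw s = -Complex.I * (s : ℂ) / ((s : ℂ) - 2 * Complex.I)^2)
    (hQg : ∀ s : ℝ, Qg s = 8 * ‖Dg s‖ ^ 2 / (1 - 4 * ‖b s‖ ^ 2)^2)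
    (hQw : ∀ s : ℝ, Qw s = 8 * ‖Dw s‖ ^ 2 / (1 - 4 * ‖b s‖ ^ 2)^2) :
    (∀ s : ℝ, 1 - 4 * ‖b s‖ ^ 2 = 4 / (s^2 + 4)) ∧
    Tendsto (fun s : ℝ => Dg s / (Complex.I * (s : ℂ))) atTop (nhds 1) ∧
    Tendsto (fun s : ℝ => (s : ℂ) * Dw s) atTop (nhds (-Complex.I)) ∧
    Tendsto (fun s : ℝ => s^2 * (1 - 4 * ‖b s‖ ^ 2)) atTop (nhds 4) ∧
    Tendsto (fun s : ℝ => Qg s / s^6) atTop (nhds (1/2)) ∧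
    Tendsto (fun s : ℝ => Qw s / s^2) atTop (nhds (1/2)) := by
  have hsq : ∀ s : ℝ, s^2 + 4 ≠ 0 := fun s => by positivity
  have habs : ∀ s : ℝ, 1 - 4 * ‖b s‖ ^ 2 = 4 / (s^2 + 4) := by
    intro s
    have h1 : ‖b s‖^2 = s^2/(4*(s^2+4)) := by
      rw [hb, Complex.sq_norm, map_div₀]
      simp [Complex.normSq_apply]
      ring
    rw [h1]
    field_simp
    ring
  -- L1
  have L1 : Tendsto (fun s : ℝ => Dg s / (Complex.I * (s : ℂ))) atTop (nhds 1) := by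
    refine qF1_tendsto.congr' ?_
    filter_upwards [eventually_gt_atTop 0] with s hs
    have hs0 : (s:ℂ) ≠ 0 := Complex.ofReal_ne_zero.2 hs.ne'
    have hd := qfi_hden s
    have h1 : (1 - 2*Complex.I*(s:ℂ)⁻¹) ≠ 0 := by
      have he : (1 - 2*Complex.I*(s:ℂ)⁻¹) = ((s:ℂ) - 2*Complex.I) * (s:ℂ)⁻¹ := by
        field_simp
      rw [he]
      exact mul_ne_zero hd (inv_ne_zero hs0)
    rw [qF1, hDg]
    push_cast
    field_simp
    have hI3 : Complex.I^3 = -Complex.I := by simp [pow_succ, Complex.I_mul_I]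
    have hI4 : Complex.I^4 = 1 := by simp [pow_succ, Complex.I_mul_I]
    have hI5 : Complex.I^5 = Complex.I := by simp [pow_succ, Complex.I_mul_I]
    have hI6 : Complex.I^6 = -1 := by simp [pow_succ, Complex.I_mul_I]
    ring_nf
    try simp only [Complex.I_sq, hI3, hI4, hI5, hI6]
    try ring
  -- L2
  have L2 : Tendsto (fun s : ℝ => (s : ℂ) * Dw s) atTop (nhds (-Complex.I)) := by
    refine qF2_tendsto.congr' ?_
    filter_upwards [eventually_gt_atTop 0] with s hs
    have hs0 : (s:ℂ) ≠ 0 := Complex.ofReal_ne_zero.2 hs.ne'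
    have hd := qfi_hden s
    have h1 : (1 - 2*Complex.I*(s:ℂ)⁻¹) ≠ 0 := by
      have he : (1 - 2*Complex.I*(s:ℂ)⁻¹) = ((s:ℂ) - 2*Complex.I) * (s:ℂ)⁻¹ := by
        field_simp
      rw [he]
      exact mul_ne_zero hd (inv_ne_zero hs0)
    rw [qF2, hDw]
    push_cast
    field_simp
  -- L4
  have L4 : Tendsto (fun s : ℝ => s^2 * (1 - 4 * ‖b s‖ ^ 2)) atTop (nhds 4) := by
    refine qF4_tendsto.congr' ?_
    filter_upwards [eventually_gt_atTop 0] with s hs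
    rw [habs, qF4]
    have hs0 : s ≠ 0 := hs.ne'
    field_simp
  -- abs limits
  have A1 : Tendsto (fun s : ℝ => ‖Dg s / (Complex.I * (s:ℂ))‖ ^ 2) atTop (nhds 1) := by
    have := (continuous_norm.tendsto (1:ℂ)).comp L1
    have h2 := this.pow 2
    simpa using h2
  have A2 : Tendsto (fun s : ℝ => ‖(s:ℂ) * Dw s‖ ^ 2) atTop (nhds 1) := by
    have := (continuous_norm.tendsto (-Complex.I)).comp L2
    have h2 := this.pow 2
    simpa using h2
  -- Qg
  have L5 : Tendsto (fun s : ℝ => Qg s / s^6) atTop (nhds (1/2)) := by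
    have hmul := A1.mul qF3_tendsto
    rw [one_mul] at hmul
    refine hmul.congr' ?_
    filter_upwards [eventually_gt_atTop 0] with s hs
    have hs0 : s ≠ 0 := hs.ne'
    have habsI : ‖Complex.I * (s:ℂ)‖ = s := by
      rw [norm_mul, Complex.norm_I, Complex.norm_real, one_mul, Real.norm_of_nonneg hs.le]
    rw [norm_div, habsI, hQg, habs, qF3]
    field_simp
    ring
  -- Qw
  have L6 : Tendsto (fun s : ℝ => Qw s / s^2) atTop (nhds (1/2)) := by
    have hmul := A2.mul qF3_tendsto
    rw [one_mul] at hmul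
    refine hmul.congr' ?_
    filter_upwards [eventually_gt_atTop 0] with s hs
    have hs0 : s ≠ 0 := hs.ne'
    have habsS : ‖((s:ℂ))‖ = s := by
      rw [Complex.norm_real, Real.norm_of_nonneg hs.le]
    rw [norm_mul, habsS, hQw, habs, qF3]
    field_simp
    ring
  exact ⟨habs, L1, L2, L4, L5, L6⟩
end
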